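/- Let n ≥ 3 be odd, and let X and Y be disjoint subsets of the vertices of the cycle C_n with |X| and |Y| both odd. Let B be the complete bipartite graph on the vertex set of C_n whose edges are all pairs {x,y} with x ∈ X and y ∈ Y. Then the 2-rank of the symmetric difference graph C_n △ B satisfies r₂(C_n △ B) ≥ n - 1. -/

import Mathlib

open scoped Classical

/-- A list of bicliques `B 0, …, B (k-1)` (each given by a pair of disjoint
vertex subsets) is an *odd cover* of `G` if two distinct vertices are adjacent
in `G` exactly when they lie in opposite parts of an odd number of the bicliques. -/
def IsOddCover {V : Type*} [Fintype V] (G : SimpleGraph V) {k : ℕ}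
    (B : Fin k → Finset V × Finset V) : Prop :=
  (∀ i, Disjoint (B i).1 (B i).2) ∧
  ∀ u v : V, u ≠ v →
    (G.Adj u v ↔ Odd (Finset.univ.filter (fun i : Fin k =>
      (u ∈ (B i).1 ∧ v ∈ (B i).2) ∨ (u ∈ (B i).2 ∧ v ∈ (B i).1))).card)

/-- `b2 G` is the minimum cardinality of an odd cover of `G`. -/
noncomputable def b2 {V : Type*} [Fintype V] (G : SimpleGraph V) : ℕ :=
  sInf {k : ℕ | ∃ B : Fin k → Finset V × Finset V, IsOddCover G B}

/-- `r2 G` is the rank of the adjacency matrix of `G` over `𝔽₂`. -/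
noncomputable def r2 {V : Type*} [Fintype V] (G : SimpleGraph V) : ℕ :=
  (Matrix.of fun u v : V => if G.Adj u v then (1 : ZMod 2) else 0).rank


/-- The cycle graph on `n` vertices `0,1,…,n-1`, with `i` adjacent to `j`
iff `i - j ≡ ±1 (mod n)`. -/
def cycleGraph (n : ℕ) : SimpleGraph (Fin n) :=
  SimpleGraph.fromRel (fun i j => (i.val + 1) % n = j.val)

open Fin.CommRing in
theorem rank_aux (n : ℕ) [NeZero n] (hn : 3 ≤ n) (hodd : Odd n)
    (X Y : Finset (Fin n)) (hXY : Disjoint X Y)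
    (hX : Odd X.card) (hY : Odd Y.card)
    (M : Matrix (Fin n) (Fin n) (ZMod 2))
    (hM : ∀ u v : Fin n, M u v =
      ((if u + 1 = v then (1:ZMod 2) else 0) + (if v + 1 = u then (1:ZMod 2) else 0))
      + ((if u ∈ X then (1:ZMod 2) else 0) * (if v ∈ Y then (1:ZMod 2) else 0)
       + (if u ∈ Y then (1:ZMod 2) else 0) * (if v ∈ X then (1:ZMod 2) else 0))) :
    n - 1 ≤ M.rank := by
  -- cast of odd cards
  have hcast : ∀ k : ℕ, Odd k → (k : ZMod 2) = 1 := by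
    intro k hk
    obtain ⟨m, hm⟩ := hk
    subst hm; push_cast
    have : (2 : ZMod 2) = 0 := rfl
    rw [this]; ring
  have hXc : ((X.card : ℕ) : ZMod 2) = 1 := hcast _ hX
  have hYc : ((Y.card : ℕ) : ZMod 2) = 1 := hcast _ hY
  -- indicator sums
  have hindsum : ∀ (S : Finset (Fin n)) (v : Fin n → ZMod 2),
      (∑ w : Fin n, (if w ∈ S then (1:ZMod 2) else 0) * v w) = ∑ w ∈ S, v w := by
    intro S v
    simp [ite_mul, Finset.sum_ite_mem]
  have hord : ∀ S : Finset (Fin n), (∑ w ∈ S, (1:ZMod 2)) = (S.card : ZMod 2) := by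
    intro S; simp
  -- shift indicator sums
  have hshift : ∀ (c : Fin n) (v : Fin n → ZMod 2),
      (∑ w : Fin n, (if w = c then (1:ZMod 2) else 0) * v w) = v c := by
    intro c v
    simp [ite_mul, Finset.sum_ite_eq']
  have h1 : ∀ u w : Fin n, (u + 1 = w) = (w = u + 1) := fun u w =>
    propext eq_comm
  have h2 : ∀ u w : Fin n, (w + 1 = u) = (w = u - 1) := fun u w =>
    propext (eq_sub_iff_add_eq).symm
  -- pointwise formula for M.mulVec
  have hmv : ∀ (v : Fin n → ZMod 2) (u : Fin n), M.mulVec v u =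
      (v (u + 1) + v (u - 1))
      + ((if u ∈ X then (1:ZMod 2) else 0) * (∑ w ∈ Y, v w)
       + (if u ∈ Y then (1:ZMod 2) else 0) * (∑ w ∈ X, v w)) := by
    intro v u
    have : M.mulVec v u = ∑ w : Fin n, M u w * v w := by
      simp [Matrix.mulVec, dotProduct]
    rw [this]
    have expand : ∀ w : Fin n, M u w * v w =
        (if w = u + 1 then (1:ZMod 2) else 0) * v w
        + (if w = u - 1 then (1:ZMod 2) else 0) * v w
        + ((if u ∈ X then (1:ZMod 2) else 0) * ((if w ∈ Y then (1:ZMod 2) else 0) * v w)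
         + (if u ∈ Y then (1:ZMod 2) else 0) * ((if w ∈ X then (1:ZMod 2) else 0) * v w)) := by
      intro w
      rw [hM u w]
      simp only [h1 u w, h2 u w]
      ring
    rw [Finset.sum_congr rfl (fun w _ => expand w)]
    rw [Finset.sum_add_distrib, Finset.sum_add_distrib, Finset.sum_add_distrib,
      ← Finset.mul_sum, ← Finset.mul_sum, hshift, hshift, hindsum, hindsum]
  -- total sum of M.mulVec v
  have htot : ∀ v : Fin n → ZMod 2, (∑ u : Fin n, M.mulVec v u) =
      (∑ w ∈ X, v w) + (∑ w ∈ Y, v w) := by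
    intro v
    rw [Finset.sum_congr rfl (fun u _ => hmv v u)]
    rw [Finset.sum_add_distrib, Finset.sum_add_distrib, Finset.sum_add_distrib]
    have e1 : (∑ u : Fin n, v (u + 1)) = ∑ u : Fin n, v u :=
      Fintype.sum_equiv (Equiv.addRight (1 : Fin n)) _ _ (fun u => rfl)
    have e2 : (∑ u : Fin n, v (u - 1)) = ∑ u : Fin n, v u :=
      Fintype.sum_equiv (Equiv.subRight (1 : Fin n)) _ _ (fun u => rfl)
    have hXone : (∑ u : Fin n, (if u ∈ X then (1:ZMod 2) else 0)) = 1 := by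
      have := hindsum X (fun _ => 1)
      simp only [mul_one] at this
      rw [this, hord, hXc]
    have hYone : (∑ u : Fin n, (if u ∈ Y then (1:ZMod 2) else 0)) = 1 := by
      have := hindsum Y (fun _ => 1)
      simp only [mul_one] at this
      rw [this, hord, hYc]
    have e3 : (∑ u : Fin n, (if u ∈ X then (1:ZMod 2) else 0) * (∑ w ∈ Y, v w))
        = ∑ w ∈ Y, v w := by
      rw [← Finset.sum_mul, hXone, one_mul]
    have e4 : (∑ u : Fin n, (if u ∈ Y then (1:ZMod 2) else 0) * (∑ w ∈ X, v w))
        = ∑ w ∈ X, v w := by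
      rw [← Finset.sum_mul, hYone, one_mul]
    rw [e1, e2, e3, e4]
    have : (∑ u : Fin n, v u) + (∑ u : Fin n, v u) = 0 := CharTwo.add_self_eq_zero _
    rw [this, zero_add, add_comm]
  -- kernel elements with zero X-sum vanish
  have hker : ∀ v : Fin n → ZMod 2, M.mulVec v = 0 → (∑ u ∈ X, v u) = 0 → v = 0 := by
    intro v hv hsX
    have hsY : (∑ u ∈ Y, v u) = 0 := by
      have h0 : (∑ u : Fin n, M.mulVec v u) = 0 := by
        rw [hv]; simp
      rw [htot v, hsX, zero_add] at h0
      exact h0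
    have hpt : ∀ u : Fin n, v (u + 1) + v (u - 1) = 0 := by
      intro u
      have := congrFun hv u
      rw [hmv v u, hsX, hsY] at this
      simpa using this
    have hstep : ∀ w : Fin n, v (w + 2) = v w := by
      intro w
      have h := hpt (w + 1)
      have e1 : w + 1 + 1 = w + 2 := by ring
      have e2 : w + 1 - 1 = w := by ring
      rw [e1, e2] at h
      have := eq_neg_of_add_eq_zero_left h
      rwa [CharTwo.neg_eq] at this
    have hk : ∀ (k : ℕ) (w : Fin n), v (w + (2 * k : ℕ)) = v w := by
      intro k
      induction k with
      | zero => intro w; simp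
      | succ k ih =>
        intro w
        have e : (w + ((2 * (k+1) : ℕ) : Fin n)) = (w + ((2 * k : ℕ) : Fin n)) + 2 := by
          push_cast; ring
        rw [e, hstep, ih]
    obtain ⟨m, hm⟩ := hodd
    have hconst : ∀ i : Fin n, v i = v 0 := by
      intro i
      have e : i = (0 : Fin n) + ((2 * ((m + 1) * i.val) : ℕ) : Fin n) := by
        apply Fin.ext
        rw [Fin.add_def]
        simp only [Fin.val_zero, Nat.zero_add, Fin.val_natCast]
        have e3 : (2 * ((m + 1) * i.val)) % n = i.val := by
          have e2 : 2 * ((m + 1) * i.val) = i.val + i.val * n := by subst hm; ring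
          rw [e2, Nat.add_mul_mod_self_right, Nat.mod_eq_of_lt i.isLt]
        rw [e3, Nat.mod_eq_of_lt i.isLt]
      rw [e, hk]
    rcases (show ∀ a : ZMod 2, a = 0 ∨ a = 1 by decide) (v 0) with h0 | h0
    · funext i; rw [hconst i, h0]; rfl
    · exfalso
      have : (∑ u ∈ X, v u) = (X.card : ZMod 2) := by
        rw [← hord X]
        exact Finset.sum_congr rfl (fun u _ => by rw [hconst u, h0])
      rw [this, hXc] at hsX
      exact one_ne_zero hsX
  -- linear functional
  let phi : (Fin n → ZMod 2) →ₗ[ZMod 2] ZMod 2 :=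
    { toFun := fun v => ∑ u ∈ X, v u
      map_add' := fun a b => by simp [Finset.sum_add_distrib]
      map_smul' := fun c a => by simp [Finset.mul_sum] }
  have hinj : Function.Injective (phi.comp (LinearMap.ker M.mulVecLin).subtype) := by
    rw [← LinearMap.ker_eq_bot, LinearMap.ker_eq_bot']
    intro w hw
    have hmem : M.mulVec w.1 = 0 := by
      have h := w.2
      rwa [LinearMap.mem_ker, Matrix.mulVecLin_apply] at h
    have hphi : (∑ u ∈ X, (w.1) u) = 0 := hw
    exact Subtype.ext (hker w.1 hmem hphi)
  have hle : Module.finrank (ZMod 2) (LinearMap.ker M.mulVecLin) ≤ 1 := by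
    have h := LinearMap.finrank_le_finrank_of_injective hinj
    simpa using h
  have hrn := LinearMap.finrank_range_add_finrank_ker M.mulVecLin
  rw [Module.finrank_pi, Fintype.card_fin] at hrn
  have hrk : M.rank = Module.finrank (ZMod 2) (LinearMap.range M.mulVecLin) := rfl
  omega

theorem stmt13 (n : ℕ) (hn : 3 ≤ n) (hodd : Odd n)
    (X Y : Finset (Fin n)) (hXY : Disjoint X Y)
    (hX : Odd X.card) (hY : Odd Y.card) :
    n - 1 ≤ r2 (symmDiff (cycleGraph n)
      (SimpleGraph.fromRel (fun u v => u ∈ X ∧ v ∈ Y))) := by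
  haveI : NeZero n := ⟨by omega⟩
  unfold r2
  apply rank_aux n hn hodd X Y hXY hX hY
  intro u v
  have hval : ∀ a : Fin n, (a + 1).val = (a.val + 1) % n := by
    intro a
    rw [Fin.add_def]
    simp [Fin.val_one', Nat.one_mod_eq_one.mpr (show n ≠ 1 by omega)]
  have hmod : ∀ t : ℕ, t < n → (t + 1) % n = t + 1 ∨ ((t + 1) % n = 0 ∧ t + 1 = n) := by
    intro t ht
    rcases Nat.lt_or_ge (t + 1) n with hc | hc
    · exact Or.inl (Nat.mod_eq_of_lt hc)
    · right
      have h : t + 1 = n := by omega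
      exact ⟨by rw [h, Nat.mod_self], h⟩
  have hfin : ∀ a b : Fin n, ((a.val + 1) % n = b.val) ↔ a + 1 = b := by
    intro a b
    rw [Fin.ext_iff, hval]
  have hne1 : ∀ a : Fin n, ¬(a + 1 = a) := by
    intro a h
    have h' := congrArg Fin.val h
    rw [hval] at h'
    rcases hmod a.val a.isLt with hc | ⟨hc, hc2⟩ <;> omega
  have hnb : ∀ a b : Fin n, ¬(a + 1 = b ∧ b + 1 = a) := by
    rintro a b ⟨h1, h2⟩
    have e1 := congrArg Fin.val h1
    have e2 := congrArg Fin.val h2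
    rw [hval] at e1 e2
    rcases hmod a.val a.isLt with hc | ⟨hc, hc2⟩ <;>
      rcases hmod b.val b.isLt with hd | ⟨hd, hd2⟩ <;> omega
  have hG : (symmDiff (cycleGraph n)
      (SimpleGraph.fromRel (fun u v => u ∈ X ∧ v ∈ Y))).Adj u v ↔
      (((u ≠ v ∧ (u + 1 = v ∨ v + 1 = u)) ∧ ¬(u ≠ v ∧ ((u ∈ X ∧ v ∈ Y) ∨ (v ∈ X ∧ u ∈ Y))))
      ∨ ((u ≠ v ∧ ((u ∈ X ∧ v ∈ Y) ∨ (v ∈ X ∧ u ∈ Y))) ∧ ¬(u ≠ v ∧ (u + 1 = v ∨ v + 1 = u)))) := by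
    rw [symmDiff_def, SimpleGraph.sup_adj, SimpleGraph.sdiff_adj, SimpleGraph.sdiff_adj]
    rw [cycleGraph, SimpleGraph.fromRel_adj, SimpleGraph.fromRel_adj]
    simp only [hfin]
  simp only [Matrix.of_apply, hG]
  have hdu : ¬(u ∈ X ∧ u ∈ Y) := fun ⟨a, b⟩ => Finset.disjoint_left.mp hXY a b
  have hdv : ¬(v ∈ X ∧ v ∈ Y) := fun ⟨a, b⟩ => Finset.disjoint_left.mp hXY a b
  by_cases huv : u = v
  · subst huv
    simp only [ne_eq, not_true_eq_false, false_and, and_false, false_or, if_false,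
      or_self, if_neg (hne1 u)]
    rcases Classical.em (u ∈ X) with h3 | h3 <;> rcases Classical.em (u ∈ Y) with h4 | h4 <;>
      simp [h3, h4] <;> first | rfl | (exact absurd ⟨h3, h4⟩ hdu)
  · have hnbuv : ¬(u + 1 = v ∧ v + 1 = u) := hnb u v
    clear hval hmod hfin hne1 hnb hG
    by_cases h1 : u + 1 = v <;> by_cases h2 : v + 1 = u <;>
    by_cases h3 : u ∈ X <;> by_cases h4 : u ∈ Y <;>
    by_cases h5 : v ∈ X <;> by_cases h6 : v ∈ Y <;>
      simp_all <;> decide
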